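/- Let H₁ and H₂ be Hilbert spaces, L : H₁ → H₂ a bounded linear operator, and φ ∈ H₂. Then φ is in the range of L if and only if there exists c > 0 such that for all ψ ∈ H₂, |⟨ψ, φ⟩| ≤ c‖L*ψ‖, where L* is the adjoint of L. -/

import Mathlib

open scoped InnerProductSpace

theorem stmt0 {H₁ H₂ : Type*} [NormedAddCommGroup H₁] [InnerProductSpace ℂ H₁] [CompleteSpace H₁]
    [NormedAddCommGroup H₂] [InnerProductSpace ℂ H₂] [CompleteSpace H₂]
    (L : H₁ →L[ℂ] H₂) (φ : H₂) :
    φ ∈ Set.range L ↔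
      ∃ c > 0, ∀ ψ : H₂, ‖⟪ψ, φ⟫_ℂ‖ ≤ c * ‖ContinuousLinearMap.adjoint L ψ‖ := by
  set A := ContinuousLinearMap.adjoint L with hA
  constructor
  · rintro ⟨x, rfl⟩
    refine ⟨‖x‖ + 1, by positivity, fun ψ => ?_⟩
    have h1 : ⟪ψ, L x⟫_ℂ = ⟪A ψ, x⟫_ℂ := (ContinuousLinearMap.adjoint_inner_left L x ψ).symm
    rw [h1]
    calc ‖⟪A ψ, x⟫_ℂ‖ ≤ ‖A ψ‖ * ‖x‖ := norm_inner_le_norm _ _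
      _ ≤ (‖x‖ + 1) * ‖A ψ‖ := by nlinarith [norm_nonneg (A ψ)]
  · rintro ⟨c, hc, hb⟩
    -- the functional ψ ↦ ⟪φ, ψ⟫ kills ker A
    set f : H₂ →ₗ[ℂ] ℂ := (innerSL ℂ φ : H₂ →L[ℂ] ℂ).toLinearMap with hf
    have hker : LinearMap.ker (A : H₂ →ₗ[ℂ] H₁) ≤ LinearMap.ker f := by
      intro ψ hψ
      have hψ' : A ψ = 0 := hψ
      have := hb ψ
      rw [hψ', norm_zero, mul_zero] at this
      have h0 : ⟪ψ, φ⟫_ℂ = 0 := norm_le_zero_iff.mp this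
      simp only [LinearMap.mem_ker, hf, ContinuousLinearMap.coe_coe, innerSL_apply_apply]
      rw [← inner_conj_symm, h0, map_zero]
    set h₀ : (H₂ ⧸ LinearMap.ker (A : H₂ →ₗ[ℂ] H₁)) →ₗ[ℂ] ℂ :=
      (LinearMap.ker (A : H₂ →ₗ[ℂ] H₁)).liftQ f hker with hh₀
    set e := (A : H₂ →ₗ[ℂ] H₁).quotKerEquivRange with he
    set h : (LinearMap.range (A : H₂ →ₗ[ℂ] H₁)) →ₗ[ℂ] ℂ := h₀ ∘ₗ e.symm.toLinearMap with hh
    have key : ∀ (ψ : H₂) (hw : (A : H₂ →ₗ[ℂ] H₁) ψ ∈ LinearMap.range (A : H₂ →ₗ[ℂ] H₁)),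
        h ⟨(A : H₂ →ₗ[ℂ] H₁) ψ, hw⟩ = ⟪φ, ψ⟫_ℂ := by
      intro ψ hw
      have h1 : (⟨(A : H₂ →ₗ[ℂ] H₁) ψ, hw⟩ : LinearMap.range (A : H₂ →ₗ[ℂ] H₁))
          = e (Submodule.Quotient.mk ψ) := rfl
      rw [hh, LinearMap.comp_apply, h1, LinearEquiv.coe_toLinearMap, e.symm_apply_apply]
      simp [hh₀, hf]
    have hbound : ∀ v : LinearMap.range (A : H₂ →ₗ[ℂ] H₁), ‖h v‖ ≤ c * ‖v‖ := by
      rintro ⟨w, hw⟩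
      obtain ⟨ψ, rfl⟩ := hw
      show ‖h ⟨(A : H₂ →ₗ[ℂ] H₁) ψ, LinearMap.mem_range_self _ ψ⟩‖ ≤ c * ‖(⟨(A : H₂ →ₗ[ℂ] H₁) ψ, LinearMap.mem_range_self _ ψ⟩ : LinearMap.range (A : H₂ →ₗ[ℂ] H₁))‖
      rw [key ψ _]
      have h2 := hb ψ
      have h3 : ‖⟪φ, ψ⟫_ℂ‖ = ‖⟪ψ, φ⟫_ℂ‖ := by
        rw [← inner_conj_symm ψ φ, RCLike.norm_conj]
      rw [h3]
      exact h2
    set hc' : (LinearMap.range (A : H₂ →ₗ[ℂ] H₁)) →L[ℂ] ℂ := h.mkContinuous c hbound with hhc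
    obtain ⟨g, hg, _⟩ := exists_extension_norm_eq (LinearMap.range (A : H₂ →ₗ[ℂ] H₁)) hc'
    set x := (InnerProductSpace.toDual ℂ H₁).symm g with hx
    refine ⟨x, ?_⟩
    have hgx : ∀ v : H₁, ⟪x, v⟫_ℂ = g v := fun v =>
      InnerProductSpace.toDual_symm_apply
    have main : ∀ ψ : H₂, ⟪L x, ψ⟫_ℂ = ⟪φ, ψ⟫_ℂ := by
      intro ψ
      have h1 : ⟪L x, ψ⟫_ℂ = ⟪x, A ψ⟫_ℂ :=
        (ContinuousLinearMap.adjoint_inner_right L x ψ).symm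
      rw [h1, hgx (A ψ)]
      have h2 := hg ⟨(A : H₂ →ₗ[ℂ] H₁) ψ, LinearMap.mem_range_self _ ψ⟩
      rw [show (A ψ : H₁) = (A : H₂ →ₗ[ℂ] H₁) ψ from rfl, h2]
      show h _ = _
      exact key ψ _
    have : ∀ ψ : H₂, ⟪L x - φ, ψ⟫_ℂ = 0 := by
      intro ψ; rw [inner_sub_left, main ψ, sub_self]
    have h0 : L x - φ = 0 := by
      have := this (L x - φ)
      exact inner_self_eq_zero.mp this
    exact sub_eq_zero.mp h0
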